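/- The classical Gauss-Lucas theorem: if f is a non-constant polynomial over the complex numbers, then every root of its derivative f' lies in the convex hull of the set of roots of f. -/

import Mathlib

open Polynomial Complex

theorem gauss_lucas_polynomial (f : Polynomial ℂ) (hf : 1 ≤ f.degree)
    (z : ℂ) (hz : (Polynomial.derivative f).eval z = 0) :
    z ∈ convexHull ℝ {w : ℂ | f.eval w = 0} := by
  classical
  by_cases hz' : f.eval z = 0
  · exact subset_convexHull ℝ _ hz'
  set t : Multiset ℂ := f.roots with ht
  have hf0 : f ≠ 0 := fun h => by simp [h] at hf
  have hroot : ∀ r ∈ t, f.eval r = 0 := fun r hr => (mem_roots hf0).1 hr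
  have hne : ∀ r ∈ t, z - r ≠ 0 := by
    intro r hr h
    exact hz' (by rw [sub_eq_zero.1 h]; exact hroot r hr)
  have hcard : t.card = f.natDegree :=
    IsAlgClosed.card_roots_eq_natDegree
  have htne : t ≠ 0 := by
    intro h
    have h1 : 0 < f.natDegree := natDegree_pos_iff_degree_pos.2 (lt_of_lt_of_le zero_lt_one hf)
    rw [← hcard, h] at h1; simp at h1
  set a : ℂ := f.leadingCoeff with ha
  have heq : f = Polynomial.C a * (t.map fun r => X - Polynomial.C r).prod :=
    (C_leadingCoeff_mul_prod_multiset_X_sub_C hcard).symm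
  have ha0 : a ≠ 0 := leadingCoeff_ne_zero.2 hf0
  set P : ℂ := (t.map fun r => z - r).prod with hP
  have hPeval : f.eval z = a * P := by
    rw [heq]
    simp [hP, eval_multiset_prod, Multiset.map_map, Function.comp]
  have hP0 : P ≠ 0 := fun h => hz' (by rw [hPeval, h, mul_zero])
  have hms : ∀ (s : Multiset (Polynomial ℂ)),
      s.sum.eval z = (s.map (Polynomial.eval z)).sum := by
    intro s
    simpa using map_multiset_sum (Polynomial.evalRingHom z) s
  -- the log-derivative sum identity
  have hsum : (t.map fun r => (z - r)⁻¹).sum = 0 := by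
    have hder : (Polynomial.derivative f).eval z
        = a * (t.map fun r => ((t.erase r).map fun s => z - s).prod).sum := by
      rw [heq, derivative_mul, derivative_C, zero_mul, zero_add, eval_mul, eval_C,
        derivative_prod]
      congr 1
      rw [hms, Multiset.map_map]
      congr 1
      apply Multiset.map_congr rfl
      intro r _
      simp [eval_multiset_prod, Multiset.map_map, Function.comp]
    have herase : ∀ r ∈ t, ((t.erase r).map fun s => z - s).prod = (z - r)⁻¹ * P := by
      intro r hr
      have h := Multiset.prod_map_erase (f := fun s => z - s) hr
      rw [← hP] at h
      field_simp [hne r hr]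
      linear_combination h
    have hkey : (Polynomial.derivative f).eval z
        = a * P * (t.map fun r => (z - r)⁻¹).sum := by
      rw [hder, Multiset.map_congr rfl herase]
      rw [show (t.map fun r => (z - r)⁻¹ * P).sum = (t.map fun r => (z - r)⁻¹).sum * P from
        Multiset.sum_map_mul_right]
      ring
    rw [hz] at hkey
    rcases mul_eq_zero.1 hkey.symm with h | h
    · exact absurd h (mul_ne_zero ha0 hP0)
    · exact h
  -- conjugate it
  set w : ℂ → ℝ := fun r => (normSq (z - r))⁻¹ with hw
  have hwpos : ∀ r ∈ t, 0 < w r := fun r hr =>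
    inv_pos.2 (normSq_pos.2 (hne r hr))
  have hsum2 : (t.map fun r => ((w r : ℂ)) * (z - r)).sum = 0 := by
    have h := congrArg (starRingEnd ℂ) hsum
    rw [map_multiset_sum, Multiset.map_map, map_zero] at h
    rw [← h]
    congr 1
    apply Multiset.map_congr rfl
    intro r hr
    have h0 : z - r ≠ 0 := hne r hr
    have hns : (normSq (z - r) : ℂ) ≠ 0 := by
      simpa using (normSq_pos.2 h0).ne'
    have hone : ((w r : ℂ) * (z - r)) * starRingEnd ℂ (z - r) = 1 := by
      rw [mul_assoc, mul_conj, hw]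
      push_cast
      exact inv_mul_cancel₀ hns
    have := eq_inv_of_mul_eq_one_left
      (a := (w r : ℂ) * (z - r)) (b := starRingEnd ℂ (z - r)) hone
    simp only [Function.comp_apply, map_inv₀]
    exact this
  -- rearrange
  set W : ℝ := (t.map w).sum with hW
  have hWpos : 0 < W := by
    rw [hW]
    have h : ((t.map w).map (fun _ => (0:ℝ))).sum < ((t.map w).map id).sum := by
      apply Multiset.sum_lt_sum_of_nonempty
      · simpa using htne
      · intro x hx
        simp only [id]
        obtain ⟨r, hr, rfl⟩ := Multiset.mem_map.1 hx
        exact hwpos r hr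
    simpa using h
  have hsum3 : (W : ℂ) * z = (t.map fun r => (w r : ℂ) * r).sum := by
    have expand : (t.map fun r => ((w r : ℂ)) * (z - r)).sum
        = (t.map fun r => (w r : ℂ) * z).sum - (t.map fun r => (w r : ℂ) * r).sum := by
      rw [← Multiset.sum_map_sub]
      exact congrArg _ (Multiset.map_congr rfl fun r _ => by ring)
    rw [expand] at hsum2
    have hz1 : (t.map fun r => (w r : ℂ) * z).sum = (W : ℂ) * z := by
      have hcast : ((t.map w).sum : ℂ) = (t.map fun r => (w r : ℂ)).sum := by
        simpa [Multiset.map_map] using map_multiset_sum Complex.ofRealHom (t.map w)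
      rw [show (t.map fun r => (w r : ℂ) * z).sum = (t.map fun r => (w r : ℂ)).sum * z from
        Multiset.sum_map_mul_right, hW, hcast]
    rw [hz1] at hsum2
    exact sub_eq_zero.1 hsum2
  -- conclude with center of mass over the finset of roots
  set ww : ℂ → ℝ := fun r => (t.count r : ℝ) * w r with hww
  have hcm : t.toFinset.centerMass ww id = z := by
    rw [Finset.centerMass]
    have hsw : ∑ r ∈ t.toFinset, ww r = W := by
      rw [hW, Finset.sum_multiset_map_count t w]
      exact Finset.sum_congr rfl fun r _ => by rw [hww]; push_cast; rw [nsmul_eq_mul]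
    have hsp : ∑ r ∈ t.toFinset, ww r • (id r) = (t.map fun r => w r • r).sum := by
      rw [Finset.sum_multiset_map_count t (fun r => w r • r)]
      refine Finset.sum_congr rfl fun r _ => ?_
      rw [hww, id, mul_smul, ← Nat.cast_smul_eq_nsmul ℝ]
    rw [hsw, hsp]
    have : (t.map fun r => w r • r).sum = (W : ℂ) * z := by
      rw [hsum3]
      exact congrArg _ (Multiset.map_congr rfl fun r _ => by
        rw [Complex.real_smul])
    rw [this, ← Complex.real_smul, smul_smul, inv_mul_cancel₀ hWpos.ne', one_smul]
  rw [← hcm]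
  apply Finset.centerMass_mem_convexHull
  · intro r hr
    exact le_of_lt (mul_pos (by
      have := Multiset.count_pos.2 (Multiset.mem_toFinset.1 hr)
      exact_mod_cast this) (hwpos r (Multiset.mem_toFinset.1 hr)))
  · rw [show ∑ r ∈ t.toFinset, ww r = W from ?_]
    · exact hWpos
    · rw [hW, Finset.sum_multiset_map_count t w]
      exact Finset.sum_congr rfl fun r _ => by rw [hww]; push_cast; rw [nsmul_eq_mul]
  · intro r hr
    exact hroot r (Multiset.mem_toFinset.1 hr)
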